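/- (Theorem 1) Assume: Ĵ_N is continuous, continuously differentiable and strictly convex in U for each fixed x, and sandwiched by class-K∞ functions, α(‖(U,x)‖) ≤ Ĵ_N(U,x) ≤ ᾱ(‖(U,x)‖) for all (U,x); ℓ̂ is continuous and positive definite (ℓ̂(x,u) > 0 for (x,u) ≠ (0,0) and ℓ̂(0,0) = 0); k_f is continuous with k_f(0,0) = 0 and the shift decrease condition Ĵ_N(Ψ_s(U,x), Ax+BΠ₀U) − Ĵ_N(U,x) ≤ −ℓ̂(x,Π₀U) holds for all (U,x); Ψ_o is continuous and satisfies Ĵ_N(Ψ_o(U,x),x) − Ĵ_N(U,x) ≤ −γ(U,x) for all (U,x), where γ is continuous, γ ≥ 0, and γ(U,x) = 0 if and only if ∇_U Ĵ_N(U,x) = 0. Then for every sequence i_T(0), i_T(1), … of natural numbers, the origin (U,x) = (0,0) of the closed-loop system is globally asymptotically stable: (a) for every ε > 0 there exists η > 0 such that ‖(U₀,x₀)‖ < η implies ‖(U(k),x(k))‖ < ε for all k ≥ 0, and (b) for every initial condition (U₀,x₀) ∈ ℝ^{Nm}×ℝⁿ, (U(k),x(k)) → (0,0) as k → ∞. 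-/

import Mathlib

open Matrix

/-- The shift operator `Ψ_s(U,x) = (u₁,…,u_{N−1}, k_f(U,x))`. -/
def shiftOp {n m N : ℕ} (kf : (Fin N → Fin m → ℝ) → (Fin n → ℝ) → Fin m → ℝ)
    (u : Fin N → Fin m → ℝ) (x : Fin n → ℝ) : Fin N → Fin m → ℝ :=
  fun i => if h : (i : ℕ) + 1 < N then u ⟨(i : ℕ) + 1, h⟩ else kf u x

/-- The iterated optimization operator
`Φ⁰(U,x) = Ψ_s(U,x)`, `Φⁱ(U,x) = Ψ_o(Φ^{i−1}(U,x), Ax + BΠ₀U)` for `i ≥ 1`. -/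
def PhiIter {n m N : ℕ} [NeZero N] (A : Matrix (Fin n) (Fin n) ℝ)
    (B : Matrix (Fin n) (Fin m) ℝ)
    (kf : (Fin N → Fin m → ℝ) → (Fin n → ℝ) → Fin m → ℝ)
    (Ψo : (Fin N → Fin m → ℝ) → (Fin n → ℝ) → Fin N → Fin m → ℝ) :
    ℕ → (Fin N → Fin m → ℝ) → (Fin n → ℝ) → Fin N → Fin m → ℝ
  | 0, u, x => shiftOp kf u x
  | i + 1, u, x => Ψo (PhiIter A B kf Ψo i u x) (A.mulVec x + B.mulVec (u 0))

/-- The closed-loop system `x(k+1) = Ax(k) + BΠ₀U(k)`, `U(k+1) = Φ^{i_T(k)}(U(k),x(k))`. -/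
def cloop {n m N : ℕ} [NeZero N] (A : Matrix (Fin n) (Fin n) ℝ)
    (B : Matrix (Fin n) (Fin m) ℝ)
    (kf : (Fin N → Fin m → ℝ) → (Fin n → ℝ) → Fin m → ℝ)
    (Ψo : (Fin N → Fin m → ℝ) → (Fin n → ℝ) → Fin N → Fin m → ℝ)
    (iT : ℕ → ℕ) (U0 : Fin N → Fin m → ℝ) (x0 : Fin n → ℝ) :
    ℕ → (Fin N → Fin m → ℝ) × (Fin n → ℝ)
  | 0 => (U0, x0)
  | k + 1 =>
    (PhiIter A B kf Ψo (iT k) (cloop A B kf Ψo iT U0 x0 k).1 (cloop A B kf Ψo iT U0 x0 k).2,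
      A.mulVec (cloop A B kf Ψo iT U0 x0 k).2 + B.mulVec ((cloop A B kf Ψo iT U0 x0 k).1 0))

/-- Euclidean norm of a pair `(U,x)`. -/
noncomputable def pairNorm {n m N : ℕ} (u : Fin N → Fin m → ℝ) (x : Fin n → ℝ) : ℝ :=
  Real.sqrt ((∑ i, ∑ j, (u i j) ^ 2) + ∑ i, (x i) ^ 2)

/-- A class-`K∞` function: continuous, strictly increasing, vanishing at `0`, unbounded. -/
def IsKInfty (α : ℝ → ℝ) : Prop :=
  ContinuousOn α (Set.Ici 0) ∧ StrictMonoOn α (Set.Ici 0) ∧ α 0 = 0 ∧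
    Filter.Tendsto α Filter.atTop Filter.atTop

lemma convex_min_of_fderiv_eq_zero {E : Type*} [NormedAddCommGroup E] [NormedSpace ℝ E]
    {f : E → ℝ} (hconv : ConvexOn ℝ Set.univ f) (hdiff : Differentiable ℝ f)
    {w : E} (hgrad : fderiv ℝ f w = 0) (y : E) : f w ≤ f y := by
  have hc : Filter.Tendsto (fun n : ℕ => ‖((n : ℝ))‖) Filter.atTop Filter.atTop := by
    simpa using tendsto_natCast_atTop_atTop (R := ℝ)
  have hlim := (hdiff w).hasFDerivAt.lim (y - w) hc
  rw [hgrad] at hlim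
  simp only [ContinuousLinearMap.zero_apply] at hlim
  have hbound : ∀ᶠ k : ℕ in Filter.atTop,
      (k : ℝ) • (f (w + ((k : ℝ))⁻¹ • (y - w)) - f w) ≤ f y - f w := by
    filter_upwards [Filter.eventually_ge_atTop 1] with k hk
    have hk0 : (0 : ℝ) < (k : ℝ) := by exact_mod_cast Nat.lt_of_lt_of_le Nat.zero_lt_one hk
    have ht0 : (0 : ℝ) ≤ ((k : ℝ))⁻¹ := by positivity
    have ht1 : ((k : ℝ))⁻¹ ≤ 1 := by
      rw [inv_le_one_iff₀]; right; exact_mod_cast hk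
    have hcvx := hconv.2 (Set.mem_univ w) (Set.mem_univ y)
      (sub_nonneg.2 ht1) ht0 (by ring)
    have heq : (1 - ((k : ℝ))⁻¹) • w + ((k : ℝ))⁻¹ • y = w + ((k : ℝ))⁻¹ • (y - w) := by
      rw [sub_smul, one_smul, smul_sub]; abel
    rw [heq] at hcvx
    have hkey : f (w + ((k : ℝ))⁻¹ • (y - w)) - f w ≤ ((k : ℝ))⁻¹ * (f y - f w) := by
      simp only [smul_eq_mul] at hcvx; nlinarith [hcvx]
    calc (k : ℝ) • (f (w + ((k : ℝ))⁻¹ • (y - w)) - f w)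
        ≤ (k : ℝ) * (((k : ℝ))⁻¹ * (f y - f w)) := by
          rw [smul_eq_mul]; exact mul_le_mul_of_nonneg_left hkey hk0.le
      _ = f y - f w := by field_simp
  have := le_of_tendsto hlim hbound
  linarith

lemma norm_le_pairNorm {n m N : ℕ} (u : Fin N → Fin m → ℝ) (x : Fin n → ℝ) :
    ‖((u, x) : (Fin N → Fin m → ℝ) × (Fin n → ℝ))‖ ≤ pairNorm u x := by
  have hnn : (0:ℝ) ≤ pairNorm u x := Real.sqrt_nonneg _
  have hsq : ∀ a : ℝ, a ^ 2 ≤ (∑ i, ∑ j, (u i j) ^ 2) + ∑ i, (x i) ^ 2 → |a| ≤ pairNorm u x := by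
    intro a ha
    rw [← Real.sqrt_sq_eq_abs]
    exact Real.sqrt_le_sqrt ha
  rw [Prod.norm_def]
  apply max_le
  · rw [pi_norm_le_iff_of_nonneg hnn]
    intro i
    rw [pi_norm_le_iff_of_nonneg hnn]
    intro j
    refine hsq _ ?_
    have h1 : (u i j) ^ 2 ≤ ∑ j', (u i j') ^ 2 :=
      Finset.single_le_sum (f := fun j' => (u i j') ^ 2) (fun _ _ => sq_nonneg _)
        (Finset.mem_univ j)
    have h2 : (∑ j', (u i j') ^ 2) ≤ ∑ i', ∑ j', (u i' j') ^ 2 :=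
      Finset.single_le_sum (f := fun i' => ∑ j', (u i' j') ^ 2)
        (fun _ _ => Finset.sum_nonneg fun _ _ => sq_nonneg _) (Finset.mem_univ i)
    have h3 : (0:ℝ) ≤ ∑ i, (x i) ^ 2 := Finset.sum_nonneg fun _ _ => sq_nonneg _
    linarith
  · rw [pi_norm_le_iff_of_nonneg hnn]
    intro i
    refine hsq _ ?_
    have h1 : (x i) ^ 2 ≤ ∑ i', (x i') ^ 2 :=
      Finset.single_le_sum (f := fun i' => (x i') ^ 2) (fun _ _ => sq_nonneg _)
        (Finset.mem_univ i)
    have h2 : (0:ℝ) ≤ ∑ i, ∑ j, (u i j) ^ 2 :=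
      Finset.sum_nonneg fun _ _ => Finset.sum_nonneg fun _ _ => sq_nonneg _
    linarith

lemma pairNorm_zero {n m N : ℕ} : pairNorm (0 : Fin N → Fin m → ℝ) (0 : Fin n → ℝ) = 0 := by
  simp [pairNorm]

/-- (Theorem 1) Under the stated regularity, positive definiteness, sandwich, shift
decrease and optimizer decrease assumptions, for every sequence of iteration numbers
`i_T(·)` the origin `(U,x) = (0,0)` of the closed-loop system is globally asymptotically
stable: stable in the `ε`-`η` sense, and globally attractive. -/
theorem closed_loop_global_asymptotic_stability
    {n m N : ℕ} [NeZero N]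
    (A : Matrix (Fin n) (Fin n) ℝ) (B : Matrix (Fin n) (Fin m) ℝ)
    (J : (Fin N → Fin m → ℝ) → (Fin n → ℝ) → ℝ)
    (lhat : (Fin n → ℝ) → (Fin m → ℝ) → ℝ)
    (kf : (Fin N → Fin m → ℝ) → (Fin n → ℝ) → Fin m → ℝ)
    (Ψo : (Fin N → Fin m → ℝ) → (Fin n → ℝ) → Fin N → Fin m → ℝ)
    (γ : (Fin N → Fin m → ℝ) → (Fin n → ℝ) → ℝ)
    (αlow αup : ℝ → ℝ)
    (hJcont : Continuous (fun p : (Fin N → Fin m → ℝ) × (Fin n → ℝ) => J p.1 p.2))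
    (hJdiff : ∀ x : Fin n → ℝ, ContDiff ℝ 1 (fun u => J u x))
    (hJconv : ∀ x : Fin n → ℝ, StrictConvexOn ℝ Set.univ (fun u => J u x))
    (hαlow : IsKInfty αlow) (hαup : IsKInfty αup)
    (hsandwich : ∀ (u : Fin N → Fin m → ℝ) (x : Fin n → ℝ),
      αlow (pairNorm u x) ≤ J u x ∧ J u x ≤ αup (pairNorm u x))
    (hlcont : Continuous (fun p : (Fin n → ℝ) × (Fin m → ℝ) => lhat p.1 p.2))
    (hlzero : lhat 0 0 = 0)
    (hlpos : ∀ (x : Fin n → ℝ) (u : Fin m → ℝ), ¬(x = 0 ∧ u = 0) → 0 < lhat x u)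
    (hkfcont : Continuous (fun p : (Fin N → Fin m → ℝ) × (Fin n → ℝ) => kf p.1 p.2))
    (hkf0 : kf 0 0 = 0)
    (hshift : ∀ (u : Fin N → Fin m → ℝ) (x : Fin n → ℝ),
      J (shiftOp kf u x) (A.mulVec x + B.mulVec (u 0)) - J u x ≤ -(lhat x (u 0)))
    (hΨocont : Continuous (fun p : (Fin N → Fin m → ℝ) × (Fin n → ℝ) => Ψo p.1 p.2))
    (hopt : ∀ (u : Fin N → Fin m → ℝ) (x : Fin n → ℝ), J (Ψo u x) x - J u x ≤ -(γ u x))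
    (hγcont : Continuous (fun p : (Fin N → Fin m → ℝ) × (Fin n → ℝ) => γ p.1 p.2))
    (hγnonneg : ∀ (u : Fin N → Fin m → ℝ) (x : Fin n → ℝ), 0 ≤ γ u x)
    (hγzero : ∀ (u : Fin N → Fin m → ℝ) (x : Fin n → ℝ),
      γ u x = 0 ↔ fderiv ℝ (fun u' => J u' x) u = 0) :
    ∀ iT : ℕ → ℕ,
      (∀ ε : ℝ, 0 < ε → ∃ η : ℝ, 0 < η ∧
        ∀ (U0 : Fin N → Fin m → ℝ) (x0 : Fin n → ℝ), pairNorm U0 x0 < η →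
          ∀ k : ℕ, pairNorm (cloop A B kf Ψo iT U0 x0 k).1
            (cloop A B kf Ψo iT U0 x0 k).2 < ε) ∧
      (∀ (U0 : Fin N → Fin m → ℝ) (x0 : Fin n → ℝ),
        Filter.Tendsto (fun k => cloop A B kf Ψo iT U0 x0 k)
          Filter.atTop (nhds (0, 0))) := by
  obtain ⟨hαlc, hαlm, hαl0, hαltop⟩ := hαlow
  obtain ⟨hαuc, hαum, hαu0, hαutop⟩ := hαup
  intro iT
  have hpn : ∀ (u : Fin N → Fin m → ℝ) (x : Fin n → ℝ), 0 ≤ pairNorm u x :=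
    fun _ _ => Real.sqrt_nonneg _
  have hαlnn : ∀ s : ℝ, 0 ≤ s → 0 ≤ αlow s := by
    intro s hs
    rcases eq_or_lt_of_le hs with h | h
    · rw [← h, hαl0]
    · rw [← hαl0]; exact (hαlm Set.self_mem_Ici (Set.mem_Ici.2 hs) h).le
  have hJnn : ∀ u x, 0 ≤ J u x := fun u x => le_trans (hαlnn _ (hpn u x)) (hsandwich u x).1
  have hln : ∀ (x : Fin n → ℝ) (u : Fin m → ℝ), 0 ≤ lhat x u := by
    intro x u
    by_cases h : x = 0 ∧ u = 0
    · rw [h.1, h.2, hlzero]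
    · exact (hlpos x u h).le
  have hL0 : ∀ (i : ℕ) (u : Fin N → Fin m → ℝ) (x : Fin n → ℝ),
      J (PhiIter A B kf Ψo i u x) (A.mulVec x + B.mulVec (u 0)) ≤
        J (shiftOp kf u x) (A.mulVec x + B.mulVec (u 0)) := by
    intro i u x
    induction i with
    | zero => exact le_refl _
    | succ i ih =>
      have h1 := hopt (PhiIter A B kf Ψo i u x) (A.mulVec x + B.mulVec (u 0))
      have h2 := hγnonneg (PhiIter A B kf Ψo i u x) (A.mulVec x + B.mulVec (u 0))
      show J (Ψo (PhiIter A B kf Ψo i u x) (A.mulVec x + B.mulVec (u 0)))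
        (A.mulVec x + B.mulVec (u 0)) ≤ _
      linarith
  have hL1 : ∀ (i : ℕ) (u : Fin N → Fin m → ℝ) (x : Fin n → ℝ), i ≠ 0 →
      J (PhiIter A B kf Ψo i u x) (A.mulVec x + B.mulVec (u 0)) ≤
        J (shiftOp kf u x) (A.mulVec x + B.mulVec (u 0)) -
          γ (shiftOp kf u x) (A.mulVec x + B.mulVec (u 0)) := by
    intro i u x hi
    induction i with
    | zero => exact absurd rfl hi
    | succ i ih =>
      rcases Nat.eq_zero_or_pos i with h0 | hpos
      · subst h0
        have h1 := hopt (shiftOp kf u x) (A.mulVec x + B.mulVec (u 0))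
        show J (Ψo (PhiIter A B kf Ψo 0 u x) (A.mulVec x + B.mulVec (u 0)))
          (A.mulVec x + B.mulVec (u 0)) ≤ _
        have h2 : PhiIter A B kf Ψo 0 u x = shiftOp kf u x := rfl
        rw [h2]
        linarith
      · have hih := ih hpos.ne'
        have h1 := hopt (PhiIter A B kf Ψo i u x) (A.mulVec x + B.mulVec (u 0))
        have h2 := hγnonneg (PhiIter A B kf Ψo i u x) (A.mulVec x + B.mulVec (u 0))
        show J (Ψo (PhiIter A B kf Ψo i u x) (A.mulVec x + B.mulVec (u 0)))
          (A.mulVec x + B.mulVec (u 0)) ≤ _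
        linarith
  have hdec : ∀ (U0 : Fin N → Fin m → ℝ) (x0 : Fin n → ℝ) (k : ℕ),
      J (cloop A B kf Ψo iT U0 x0 (k+1)).1 (cloop A B kf Ψo iT U0 x0 (k+1)).2 ≤
        J (cloop A B kf Ψo iT U0 x0 k).1 (cloop A B kf Ψo iT U0 x0 k).2 -
          lhat (cloop A B kf Ψo iT U0 x0 k).2 ((cloop A B kf Ψo iT U0 x0 k).1 0) := by
    intro U0 x0 k
    have h1 : J (cloop A B kf Ψo iT U0 x0 (k+1)).1 (cloop A B kf Ψo iT U0 x0 (k+1)).2 ≤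
        J (shiftOp kf (cloop A B kf Ψo iT U0 x0 k).1 (cloop A B kf Ψo iT U0 x0 k).2)
          (A.mulVec (cloop A B kf Ψo iT U0 x0 k).2 +
            B.mulVec ((cloop A B kf Ψo iT U0 x0 k).1 0)) :=
      hL0 (iT k) (cloop A B kf Ψo iT U0 x0 k).1 (cloop A B kf Ψo iT U0 x0 k).2
    have h2 := hshift (cloop A B kf Ψo iT U0 x0 k).1 (cloop A B kf Ψo iT U0 x0 k).2
    linarith
  have hmono : ∀ (U0 : Fin N → Fin m → ℝ) (x0 : Fin n → ℝ),
      Antitone (fun k => J (cloop A B kf Ψo iT U0 x0 k).1 (cloop A B kf Ψo iT U0 x0 k).2) := by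
    intro U0 x0
    apply antitone_nat_of_succ_le
    intro k
    have h1 := hdec U0 x0 k
    have h2 := hln (cloop A B kf Ψo iT U0 x0 k).2 ((cloop A B kf Ψo iT U0 x0 k).1 0)
    linarith
  have hscont : Continuous
      (fun p : (Fin N → Fin m → ℝ) × (Fin n → ℝ) => shiftOp kf p.1 p.2) := by
    apply continuous_pi
    intro i
    by_cases h : (i : ℕ) + 1 < N
    · simp only [shiftOp, dif_pos h]
      exact (continuous_apply _).comp continuous_fst
    · simp only [shiftOp, dif_neg h]
      exact hkfcont
  constructor
  · -- stability
    intro ε hε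
    have hαe : 0 < αlow ε := by
      rw [← hαl0]; exact hαlm Set.self_mem_Ici (Set.mem_Ici.2 hε.le) hε
    have hcw : Filter.Tendsto αup (nhdsWithin 0 (Set.Ici 0)) (nhds 0) := by
      have := (hαuc 0 Set.self_mem_Ici).tendsto
      rwa [hαu0] at this
    have hev : ∀ᶠ s in nhdsWithin 0 (Set.Ici 0), αup s < αlow ε :=
      hcw.eventually_lt_const hαe
    obtain ⟨η, hη, hball⟩ := Metric.mem_nhdsWithin_iff.1 hev
    refine ⟨η, hη, ?_⟩
    intro U0 x0 hU0 k
    by_contra hcon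
    push_neg at hcon
    have h1 : αlow ε ≤ αlow (pairNorm (cloop A B kf Ψo iT U0 x0 k).1
        (cloop A B kf Ψo iT U0 x0 k).2) :=
      hαlm.monotoneOn (Set.mem_Ici.2 hε.le) (Set.mem_Ici.2 (hpn _ _)) hcon
    have h2 : J (cloop A B kf Ψo iT U0 x0 k).1 (cloop A B kf Ψo iT U0 x0 k).2 ≤ J U0 x0 :=
      hmono U0 x0 (Nat.zero_le k)
    have h3 : J U0 x0 ≤ αup (pairNorm U0 x0) := (hsandwich _ _).2
    have h4 : αup (pairNorm U0 x0) < αlow ε := by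
      apply hball
      constructor
      · rw [Metric.mem_ball, Real.dist_eq, sub_zero, abs_of_nonneg (hpn _ _)]
        exact hU0
      · exact Set.mem_Ici.2 (hpn _ _)
    have h5 := (hsandwich (cloop A B kf Ψo iT U0 x0 k).1 (cloop A B kf Ψo iT U0 x0 k).2).1
    linarith
  · -- attractivity
    intro U0 x0
    set z : ℕ → (Fin N → Fin m → ℝ) × (Fin n → ℝ) := cloop A B kf Ψo iT U0 x0 with hzdef
    set V : ℕ → ℝ := fun k => J (z k).1 (z k).2 with hVdef
    have hVmono : Antitone V := hmono U0 x0
    have hVlb : ∀ k, (0:ℝ) ≤ V k := fun k => hJnn _ _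
    have hbdd : BddBelow (Set.range V) := ⟨0, by rintro v ⟨k, rfl⟩; exact hVlb k⟩
    have hVtend : Filter.Tendsto V Filter.atTop (nhds (⨅ k, V k)) :=
      tendsto_atTop_ciInf hVmono hbdd
    set c : ℝ := ⨅ k, V k with hcdef
    have hc0 : 0 ≤ c := le_ciInf hVlb
    have hcle : ∀ k, c ≤ V k := fun k => ciInf_le hbdd k
    have hdecz : ∀ k, V (k+1) ≤ V k - lhat (z k).2 ((z k).1 0) := fun k => hdec U0 x0 k
    obtain ⟨M, hM⟩ : ∃ M : ℝ, ∀ s, M ≤ s → V 0 < αlow s := by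
      obtain ⟨M, hM⟩ := Filter.eventually_atTop.1 (hαltop.eventually_gt_atTop (V 0))
      exact ⟨M, hM⟩
    have hpnM : ∀ k, pairNorm (z k).1 (z k).2 < M := by
      intro k
      by_contra h
      push_neg at h
      have h1 := hM _ h
      have h2 : αlow (pairNorm (z k).1 (z k).2) ≤ V k := (hsandwich (z k).1 (z k).2).1
      have h3 : V k ≤ V 0 := hVmono (Nat.zero_le k)
      linarith
    have hznorm : ∀ k, ‖z k‖ ≤ M := fun k =>
      le_trans (norm_le_pairNorm (z k).1 (z k).2) (hpnM k).le
    have hVc1 : Filter.Tendsto (fun k => V (k+1)) Filter.atTop (nhds c) :=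
      hVtend.comp (Filter.tendsto_add_atTop_nat 1)
    have hdiff0 : Filter.Tendsto (fun k => V k - V (k+1)) Filter.atTop (nhds 0) := by
      have := hVtend.sub hVc1; simpa using this
    have hl0 : Filter.Tendsto (fun k => lhat (z k).2 ((z k).1 0)) Filter.atTop (nhds 0) := by
      apply tendsto_of_tendsto_of_tendsto_of_le_of_le tendsto_const_nhds hdiff0
      · exact fun k => hln _ _
      · intro k
        show lhat (z k).2 ((z k).1 0) ≤ V k - V (k + 1)
        have := hdecz k; linarith
    have hxu : Filter.Tendsto (fun k => ((z k).2, (z k).1 0)) Filter.atTop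
        (nhds ((0 : Fin n → ℝ), (0 : Fin m → ℝ))) := by
      by_contra hcon
      rw [Metric.tendsto_atTop] at hcon
      push_neg at hcon
      obtain ⟨ε, hε, hfreq⟩ := hcon
      obtain ⟨φ, hφm, hφp⟩ := Filter.extraction_of_frequently_atTop
        (Filter.frequently_atTop.2 hfreq)
      have hbd : ∀ j, ((z (φ j)).2, (z (φ j)).1 0) ∈
          Metric.closedBall (0 : (Fin n → ℝ) × (Fin m → ℝ)) M := by
        intro j
        rw [Metric.mem_closedBall, dist_zero_right, Prod.norm_def]
        apply max_le
        · exact le_trans (norm_snd_le (z (φ j))) (hznorm _)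
        · exact le_trans (le_trans (norm_le_pi_norm ((z (φ j)).1) 0)
            (norm_fst_le (z (φ j)))) (hznorm _)
      obtain ⟨q, _, ψ, hψm, hψt⟩ := (isCompact_closedBall _ _).tendsto_subseq hbd
      have hq0 : lhat q.1 q.2 = 0 := by
        have h1 : Filter.Tendsto (fun j => lhat (z (φ (ψ j))).2 ((z (φ (ψ j))).1 0))
            Filter.atTop (nhds (lhat q.1 q.2)) := (hlcont.tendsto q).comp hψt
        have h2 : Filter.Tendsto (fun j => lhat (z (φ (ψ j))).2 ((z (φ (ψ j))).1 0))
            Filter.atTop (nhds 0) := hl0.comp (hφm.comp hψm).tendsto_atTop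
        exact tendsto_nhds_unique h1 h2
      have hqne : ¬(q.1 = 0 ∧ q.2 = 0) := by
        rintro ⟨ha, hb⟩
        have hq : q = ((0 : Fin n → ℝ), (0 : Fin m → ℝ)) := Prod.ext ha hb
        have hd := tendsto_iff_dist_tendsto_zero.1 hψt
        rw [hq] at hd
        have hge := ge_of_tendsto hd (Filter.Eventually.of_forall (fun j => hφp (ψ j)))
        linarith
      exact absurd hq0 (ne_of_gt (hlpos q.1 q.2 hqne))
    have hx0 : Filter.Tendsto (fun k => (z k).2) Filter.atTop (nhds 0) :=
      (continuous_fst.tendsto _).comp hxu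
    have hu0 : Filter.Tendsto (fun k => (z k).1 0) Filter.atTop (nhds 0) :=
      (continuous_snd.tendsto _).comp hxu
    by_cases hA : ∃ K, ∀ k, K ≤ k → iT k = 0
    · obtain ⟨K, hK⟩ := hA
      have hsd : ∀ k, K ≤ k → (z (k+1)).1 = shiftOp kf (z k).1 (z k).2 := by
        intro k hk
        show PhiIter A B kf Ψo (iT k) (z k).1 (z k).2 = _
        rw [hK k hk]
        rfl
      have hcomp : ∀ (j : ℕ) (hj : j < N), ∀ k, K ≤ k →
          (z k).1 ⟨j, hj⟩ = (z (k + j)).1 0 := by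
        intro j
        induction j with
        | zero =>
          intro hj k hk
          have h0 : (⟨0, hj⟩ : Fin N) = 0 := rfl
          rw [h0, Nat.add_zero]
        | succ j ih =>
          intro hj k hk
          have hjN : j < N := Nat.lt_of_succ_lt hj
          have h1 : (z (k+1)).1 ⟨j, hjN⟩ = (z k).1 ⟨j+1, hj⟩ := by
            rw [hsd k hk]
            show (if h : j + 1 < N then (z k).1 ⟨j + 1, h⟩ else kf (z k).1 (z k).2) = _
            rw [dif_pos hj]
          have harith : k + 1 + j = k + (j + 1) := by omega
          rw [← h1, ih hjN (k+1) (le_trans hk (Nat.le_succ k)), harith]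
      have hU0tend : Filter.Tendsto (fun k => (z k).1) Filter.atTop
          (nhds (0 : Fin N → Fin m → ℝ)) := by
        rw [tendsto_pi_nhds]
        intro i
        have heq : ∀ k, K ≤ k → (z k).1 i = (z (k + (i : ℕ))).1 0 := by
          intro k hk
          have := hcomp (i : ℕ) i.isLt k hk
          simpa using this
        have h2 : Filter.Tendsto (fun k => (z (k + (i : ℕ))).1 0) Filter.atTop
            (nhds (0 : Fin m → ℝ)) := hu0.comp (Filter.tendsto_add_atTop_nat _)
        refine h2.congr' ?_
        filter_upwards [Filter.eventually_ge_atTop K] with k hk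
        exact (heq k hk).symm
      exact hU0tend.prodMk_nhds hx0
    · push_neg at hA
      obtain ⟨φ, hφm, hφp⟩ := Filter.extraction_of_frequently_atTop
        (Filter.frequently_atTop.2 hA)
      have hbd2 : ∀ j, z (φ j) ∈
          Metric.closedBall (0 : (Fin N → Fin m → ℝ) × (Fin n → ℝ)) M :=
        fun j => Metric.mem_closedBall.2 (by rw [dist_zero_right]; exact hznorm _)
      obtain ⟨zs, _, ψ, hψm, hψt⟩ := (isCompact_closedBall _ _).tendsto_subseq hbd2
      have hθm : StrictMono (φ ∘ ψ) := hφm.comp hψm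
      have hθtop : Filter.Tendsto (φ ∘ ψ) Filter.atTop Filter.atTop := hθm.tendsto_atTop
      have hγb : ∀ k, iT k ≠ 0 →
          γ (shiftOp kf (z k).1 (z k).2) ((z (k+1)).2) ≤ V k - V (k+1) := by
        intro k hk
        have h1 : V (k+1) ≤ J (shiftOp kf (z k).1 (z k).2) ((z (k+1)).2) -
            γ (shiftOp kf (z k).1 (z k).2) ((z (k+1)).2) :=
          hL1 (iT k) (z k).1 (z k).2 hk
        have h2 : J (shiftOp kf (z k).1 (z k).2) ((z (k+1)).2) -
            J (z k).1 (z k).2 ≤ -(lhat (z k).2 ((z k).1 0)) :=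
          hshift (z k).1 (z k).2
        have h3 := hln (z k).2 ((z k).1 0)
        have h4 : J (z k).1 (z k).2 = V k := rfl
        linarith
      have hγ0 : Filter.Tendsto
          (fun j => γ (shiftOp kf (z ((φ ∘ ψ) j)).1 (z ((φ ∘ ψ) j)).2) ((z ((φ ∘ ψ) j + 1)).2))
          Filter.atTop (nhds 0) := by
        apply tendsto_of_tendsto_of_tendsto_of_le_of_le tendsto_const_nhds
          (hdiff0.comp hθtop)
        · exact fun j => hγnonneg _ _
        · exact fun j => hγb ((φ ∘ ψ) j) (hφp (ψ j))
      have hshiftlim : Filter.Tendsto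
          (fun j => shiftOp kf (z ((φ ∘ ψ) j)).1 (z ((φ ∘ ψ) j)).2) Filter.atTop
          (nhds (shiftOp kf zs.1 zs.2)) := (hscont.tendsto zs).comp hψt
      have hxplim : Filter.Tendsto (fun j => (z ((φ ∘ ψ) j + 1)).2) Filter.atTop (nhds 0) :=
        hx0.comp ((Filter.tendsto_add_atTop_nat 1).comp hθtop)
      have hγzs : γ (shiftOp kf zs.1 zs.2) 0 = 0 := by
        have h1 : Filter.Tendsto
            (fun j => γ (shiftOp kf (z ((φ ∘ ψ) j)).1 (z ((φ ∘ ψ) j)).2) ((z ((φ ∘ ψ) j + 1)).2))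
            Filter.atTop (nhds (γ (shiftOp kf zs.1 zs.2) 0)) :=
          (hγcont.tendsto (shiftOp kf zs.1 zs.2, 0)).comp (hshiftlim.prodMk_nhds hxplim)
        exact tendsto_nhds_unique h1 hγ0
      have hgrad := (hγzero _ _).1 hγzs
      have hwmin : J (shiftOp kf zs.1 zs.2) 0 ≤ J 0 0 :=
        convex_min_of_fderiv_eq_zero ((hJconv 0).convexOn)
          ((hJdiff 0).differentiable one_ne_zero) hgrad 0
      have hJ00 : J 0 0 = 0 := by
        have h1 := (hsandwich 0 0).2
        rw [pairNorm_zero, hαu0] at h1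
        exact le_antisymm h1 (hJnn 0 0)
      have hJslim : Filter.Tendsto
          (fun j => J (shiftOp kf (z ((φ ∘ ψ) j)).1 (z ((φ ∘ ψ) j)).2) ((z ((φ ∘ ψ) j + 1)).2))
          Filter.atTop (nhds (J (shiftOp kf zs.1 zs.2) 0)) :=
        (hJcont.tendsto _).comp (hshiftlim.prodMk_nhds hxplim)
      have hclow : ∀ j, c ≤ J (shiftOp kf (z ((φ ∘ ψ) j)).1 (z ((φ ∘ ψ) j)).2)
          ((z ((φ ∘ ψ) j + 1)).2) := by
        intro j
        refine le_trans (hcle ((φ ∘ ψ) j + 1)) ?_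
        exact hL0 (iT ((φ ∘ ψ) j)) (z ((φ ∘ ψ) j)).1 (z ((φ ∘ ψ) j)).2
      have hcle0 : c ≤ 0 := by
        have h1 := ge_of_tendsto hJslim (Filter.Eventually.of_forall hclow)
        linarith
      have hc : c = 0 := le_antisymm hcle0 hc0
      have hV0 : Filter.Tendsto V Filter.atTop (nhds 0) := hc ▸ hVtend
      have hpn0 : Filter.Tendsto (fun k => pairNorm (z k).1 (z k).2) Filter.atTop (nhds 0) := by
        rw [Metric.tendsto_atTop]
        intro ε hε
        have hαe : 0 < αlow ε := by
          rw [← hαl0]; exact hαlm Set.self_mem_Ici (Set.mem_Ici.2 hε.le) hε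
        obtain ⟨K, hK⟩ := Metric.tendsto_atTop.1 hV0 (αlow ε) hαe
        refine ⟨K, fun k hk => ?_⟩
        have h1 : V k < αlow ε := by
          have := hK k hk
          rwa [Real.dist_eq, sub_zero, abs_of_nonneg (hVlb k)] at this
        have h2 : pairNorm (z k).1 (z k).2 < ε := by
          by_contra hge
          push_neg at hge
          have h3 : αlow ε ≤ αlow (pairNorm (z k).1 (z k).2) :=
            hαlm.monotoneOn (Set.mem_Ici.2 hε.le) (Set.mem_Ici.2 (hpn _ _)) hge
          have h4 : αlow (pairNorm (z k).1 (z k).2) ≤ V k := (hsandwich (z k).1 (z k).2).1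
          linarith
        rw [Real.dist_eq, sub_zero, abs_of_nonneg (hpn _ _)]
        exact h2
      exact squeeze_zero_norm (fun k => norm_le_pairNorm (z k).1 (z k).2) hpn0
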